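/- φ̃(n) = 2 if and only if n ∈ {5, 10, 14, 20, 42, 60}. -/
import Mathlib

/-- φ̃(n): number of m with 1 ≤ m ≤ n, gcd(m,n)=1, m not prime. -/
def phiT (n : ℕ) : ℕ :=
  ((Finset.Icc 1 n).filter (fun m => Nat.gcd m n = 1 ∧ ¬ m.Prime)).card

/-- The product of the first k primes. -/
noncomputable def primorialN (k : ℕ) : ℕ := ∏ i ∈ Finset.range k, Nat.nth Nat.Prime i

lemma cop {p n : ℕ} (hp : p.Prime) (h : ¬ p ∣ n) : Nat.Coprime p n :=
  (Nat.Prime.coprime_iff_not_dvd hp).mpr h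

lemma phiT_ge3 {n a b : ℕ} (hn : 0 < n) (ha1 : 1 < a) (hab : a < b) (hbn : b ≤ n)
    (han : Nat.Coprime a n) (hbn' : Nat.Coprime b n)
    (hpa : ¬ a.Prime) (hpb : ¬ b.Prime) : 3 ≤ phiT n := by
  have hsub : ({1, a, b} : Finset ℕ) ⊆
      (Finset.Icc 1 n).filter (fun m => Nat.gcd m n = 1 ∧ ¬ m.Prime) := by
    intro m hm
    simp only [Finset.mem_insert, Finset.mem_singleton] at hm
    simp only [Finset.mem_filter, Finset.mem_Icc]
    rcases hm with rfl | rfl | rfl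
    · exact ⟨⟨le_refl 1, hn⟩, Nat.gcd_one_left n, Nat.not_prime_one⟩
    · exact ⟨⟨by omega, by omega⟩, han, hpa⟩
    · exact ⟨⟨by omega, hbn⟩, hbn', hpb⟩
  have hcard : ({1, a, b} : Finset ℕ).card = 3 := by
    rw [Finset.card_insert_of_notMem (by simp; omega),
      Finset.card_insert_of_notMem (by simp; omega), Finset.card_singleton]
  calc 3 = ({1, a, b} : Finset ℕ).card := hcard.symm
    _ ≤ _ := Finset.card_le_card hsub

lemma cube_le_prod : ∀ p : ℕ, p.Prime → 13 ≤ p →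
    p ^ 3 ≤ ∏ r ∈ (Finset.range p).filter Nat.Prime, r := by
  intro p
  induction p using Nat.strong_induction_on with
  | _ p ih =>
    intro hp h13
    rcases eq_or_lt_of_le h13 with h | h
    · subst h; decide
    · have h13S : (13 : ℕ) ∈ (Finset.range p).filter Nat.Prime := by
        simp only [Finset.mem_filter, Finset.mem_range]
        exact ⟨h, by norm_num⟩
      have hne : ((Finset.range p).filter Nat.Prime).Nonempty := ⟨13, h13S⟩
      set p' := ((Finset.range p).filter Nat.Prime).max' hne with hp'def
      have hp'S := ((Finset.range p).filter Nat.Prime).max'_mem hne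
      simp only [Finset.mem_filter, Finset.mem_range] at hp'S
      obtain ⟨hp'lt, hp'prime⟩ := hp'S
      have hmax : ∀ r ∈ (Finset.range p).filter Nat.Prime, r ≤ p' :=
        fun r hr => Finset.le_max' _ r hr
      have h13p' : 13 ≤ p' := hmax 13 h13S
      obtain ⟨q, hqp, hq1, hq2⟩ := Nat.bertrand p' (by omega)
      have hpq : p ≤ q := by
        by_contra hc
        push_neg at hc
        have : q ≤ p' := hmax q (by
          simp only [Finset.mem_filter, Finset.mem_range]; exact ⟨hc, hqp⟩)
        omega
      have hple : p ≤ 2 * p' := le_trans hpq hq2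
      have hSeq : (Finset.range p).filter Nat.Prime =
          insert p' ((Finset.range p').filter Nat.Prime) := by
        ext r
        simp only [Finset.mem_insert, Finset.mem_filter, Finset.mem_range]
        constructor
        · rintro ⟨hr1, hr2⟩
          rcases eq_or_ne r p' with rfl | hne'
          · exact Or.inl rfl
          · refine Or.inr ⟨?_, hr2⟩
            have := hmax r (by simp only [Finset.mem_filter, Finset.mem_range]; exact ⟨hr1, hr2⟩)
            omega
        · rintro (rfl | ⟨hr1, hr2⟩)
          · exact ⟨hp'lt, hp'prime⟩
          · exact ⟨by omega, hr2⟩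
      have hnotmem : p' ∉ (Finset.range p').filter Nat.Prime := by
        simp [Finset.mem_filter, Finset.mem_range]
      have IH := ih p' hp'lt hp'prime h13p'
      calc p ^ 3 ≤ (2 * p') ^ 3 := Nat.pow_le_pow_left hple 3
        _ = 8 * p' ^ 3 := by ring
        _ ≤ p' * p' ^ 3 := Nat.mul_le_mul_right _ (by omega)
        _ ≤ p' * ∏ r ∈ (Finset.range p').filter Nat.Prime, r := Nat.mul_le_mul_left _ IH
        _ = ∏ r ∈ (Finset.range p).filter Nat.Prime, r := by
            rw [hSeq, Finset.prod_insert hnotmem]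

set_option maxHeartbeats 1000000 in
lemma key (n : ℕ) (hn : 0 < n) (h60 : 60 < n) : 3 ≤ phiT n := by
  by_cases h2 : 2 ∣ n
  case neg =>
    exact phiT_ge3 hn (a := 4) (b := 8) (by norm_num) (by norm_num) (by omega)
      ((cop Nat.prime_two h2).pow_left 2) ((cop Nat.prime_two h2).pow_left 3)
      (by norm_num) (by norm_num)
  by_cases h3 : 3 ∣ n
  case neg =>
    exact phiT_ge3 hn (a := 9) (b := 27) (by norm_num) (by norm_num) (by omega)
      ((cop Nat.prime_three h3).pow_left 2) ((cop Nat.prime_three h3).pow_left 3)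
      (by norm_num) (by norm_num)
  by_cases h5 : 5 ∣ n
  case neg =>
    have c5 : Nat.Coprime 5 n := cop (by norm_num) h5
    by_cases h7 : 7 ∣ n
    case neg =>
      have c7 : Nat.Coprime 7 n := cop (by norm_num) h7
      exact phiT_ge3 hn (a := 25) (b := 35) (by norm_num) (by norm_num) (by omega)
        (by have := c5.pow_left 2; norm_num at this ⊢; exact this)
        (by have := Nat.Coprime.mul c5 c7; norm_num at this ⊢; exact this)
        (by norm_num) (by norm_num)
    by_cases h11 : 11 ∣ n
    case neg =>
      have c11 : Nat.Coprime 11 n := cop (by norm_num) h11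
      have h42 : 42 ∣ n := Nat.Coprime.mul_dvd_of_dvd_of_dvd (by norm_num)
        (Nat.Coprime.mul_dvd_of_dvd_of_dvd (by norm_num) h2 h3) h7
      obtain ⟨k, rfl⟩ := h42
      exact phiT_ge3 hn (a := 25) (b := 55) (by norm_num) (by norm_num) (by omega)
        (by have := c5.pow_left 2; norm_num at this ⊢; exact this)
        (by have := Nat.Coprime.mul c5 c11; norm_num at this ⊢; exact this)
        (by norm_num) (by norm_num)
    case pos =>
      have h462 : 462 ∣ n := Nat.Coprime.mul_dvd_of_dvd_of_dvd (by norm_num)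
        (Nat.Coprime.mul_dvd_of_dvd_of_dvd (by norm_num)
          (Nat.Coprime.mul_dvd_of_dvd_of_dvd (by norm_num) h2 h3) h7) h11
      obtain ⟨k, rfl⟩ := h462
      have hk : 1 ≤ k := by omega
      exact phiT_ge3 hn (a := 25) (b := 125) (by norm_num) (by norm_num) (by nlinarith)
        (by have := c5.pow_left 2; norm_num at this ⊢; exact this)
        (by have := c5.pow_left 3; norm_num at this ⊢; exact this)
        (by norm_num) (by norm_num)
  by_cases h7 : 7 ∣ n
  case neg =>
    have c7 : Nat.Coprime 7 n := cop (by norm_num) h7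
    by_cases h11 : 11 ∣ n
    case neg =>
      have c11 : Nat.Coprime 11 n := cop (by norm_num) h11
      have h30 : 30 ∣ n := Nat.Coprime.mul_dvd_of_dvd_of_dvd (by norm_num)
        (Nat.Coprime.mul_dvd_of_dvd_of_dvd (by norm_num) h2 h3) h5
      obtain ⟨k, rfl⟩ := h30
      exact phiT_ge3 hn (a := 49) (b := 77) (by norm_num) (by norm_num) (by omega)
        (by have := c7.pow_left 2; norm_num at this ⊢; exact this)
        (by have := Nat.Coprime.mul c7 c11; norm_num at this ⊢; exact this)
        (by norm_num) (by norm_num)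
    by_cases h13 : 13 ∣ n
    case neg =>
      have c13 : Nat.Coprime 13 n := cop (by norm_num) h13
      have h330 : 330 ∣ n := Nat.Coprime.mul_dvd_of_dvd_of_dvd (by norm_num)
        (Nat.Coprime.mul_dvd_of_dvd_of_dvd (by norm_num)
          (Nat.Coprime.mul_dvd_of_dvd_of_dvd (by norm_num) h2 h3) h5) h11
      obtain ⟨k, rfl⟩ := h330
      have hk : 1 ≤ k := by omega
      exact phiT_ge3 hn (a := 49) (b := 91) (by norm_num) (by norm_num) (by nlinarith)
        (by have := c7.pow_left 2; norm_num at this ⊢; exact this)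
        (by have := Nat.Coprime.mul c7 c13; norm_num at this ⊢; exact this)
        (by norm_num) (by norm_num)
    case pos =>
      have h4290 : 4290 ∣ n := Nat.Coprime.mul_dvd_of_dvd_of_dvd (by norm_num)
        (Nat.Coprime.mul_dvd_of_dvd_of_dvd (by norm_num)
          (Nat.Coprime.mul_dvd_of_dvd_of_dvd (by norm_num)
            (Nat.Coprime.mul_dvd_of_dvd_of_dvd (by norm_num) h2 h3) h5) h11) h13
      obtain ⟨k, rfl⟩ := h4290
      have hk : 1 ≤ k := by omega
      exact phiT_ge3 hn (a := 49) (b := 343) (by norm_num) (by norm_num) (by nlinarith)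
        (by have := c7.pow_left 2; norm_num at this ⊢; exact this)
        (by have := c7.pow_left 3; norm_num at this ⊢; exact this)
        (by norm_num) (by norm_num)
  by_cases h11 : 11 ∣ n
  case neg =>
    have c11 : Nat.Coprime 11 n := cop (by norm_num) h11
    by_cases h13 : 13 ∣ n
    case neg =>
      have c13 : Nat.Coprime 13 n := cop (by norm_num) h13
      have h210 : 210 ∣ n := Nat.Coprime.mul_dvd_of_dvd_of_dvd (by norm_num)
        (Nat.Coprime.mul_dvd_of_dvd_of_dvd (by norm_num)
          (Nat.Coprime.mul_dvd_of_dvd_of_dvd (by norm_num) h2 h3) h5) h7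
      obtain ⟨k, rfl⟩ := h210
      have hk : 1 ≤ k := by omega
      exact phiT_ge3 hn (a := 121) (b := 143) (by norm_num) (by norm_num) (by nlinarith)
        (by have := c11.pow_left 2; norm_num at this ⊢; exact this)
        (by have := Nat.Coprime.mul c11 c13; norm_num at this ⊢; exact this)
        (by norm_num) (by norm_num)
    case pos =>
      have h2730 : 2730 ∣ n := Nat.Coprime.mul_dvd_of_dvd_of_dvd (by norm_num)
        (Nat.Coprime.mul_dvd_of_dvd_of_dvd (by norm_num)
          (Nat.Coprime.mul_dvd_of_dvd_of_dvd (by norm_num)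
            (Nat.Coprime.mul_dvd_of_dvd_of_dvd (by norm_num) h2 h3) h5) h7) h13
      obtain ⟨k, rfl⟩ := h2730
      have hk : 1 ≤ k := by omega
      exact phiT_ge3 hn (a := 121) (b := 1331) (by norm_num) (by norm_num) (by nlinarith)
        (by have := c11.pow_left 2; norm_num at this ⊢; exact this)
        (by have := c11.pow_left 3; norm_num at this ⊢; exact this)
        (by norm_num) (by norm_num)
  by_cases h13 : 13 ∣ n
  case neg =>
    have c13 : Nat.Coprime 13 n := cop (by norm_num) h13
    have h2310 : 2310 ∣ n := Nat.Coprime.mul_dvd_of_dvd_of_dvd (by norm_num)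
      (Nat.Coprime.mul_dvd_of_dvd_of_dvd (by norm_num)
        (Nat.Coprime.mul_dvd_of_dvd_of_dvd (by norm_num)
          (Nat.Coprime.mul_dvd_of_dvd_of_dvd (by norm_num) h2 h3) h5) h7) h11
    obtain ⟨k, rfl⟩ := h2310
    have hk : 1 ≤ k := by omega
    exact phiT_ge3 hn (a := 169) (b := 2197) (by norm_num) (by norm_num) (by nlinarith)
      (by have := c13.pow_left 2; norm_num at this ⊢; exact this)
      (by have := c13.pow_left 3; norm_num at this ⊢; exact this)
      (by norm_num) (by norm_num)
  -- general case: all primes up to 13 divide n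
  have hex : ∃ p, Nat.Prime p ∧ ¬ p ∣ n := by
    obtain ⟨p, hpn, hp⟩ := Nat.exists_infinite_primes (n + 1)
    exact ⟨p, hp, fun hdvd => Nat.not_le.mpr hpn (Nat.le_of_dvd hn hdvd)⟩
  classical
  have hex2 : ∃ p, Nat.Prime p ∧ ¬ p ∣ n ∧ ∀ r, r < p → r.Prime → r ∣ n := by
    refine ⟨Nat.find hex, (Nat.find_spec hex).1, (Nat.find_spec hex).2, ?_⟩
    intro r hr hrp
    by_contra hc
    exact Nat.find_min hex hr ⟨hrp, hc⟩
  obtain ⟨p, hp, hpd, hmin⟩ := hex2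
  have h13p : 13 ≤ p := by
    by_contra hc
    push_neg at hc
    interval_cases p <;> revert hp <;> simp_all <;> decide
  clear h2 h3 h5 h7 h11 h13
  have hprod : (∏ r ∈ (Finset.range p).filter Nat.Prime, r) ∣ n := by
    apply Finset.prod_primes_dvd
    · intro r hr
      simp only [Finset.mem_filter, Finset.mem_range] at hr
      exact hr.2.prime
    · intro r hr
      simp only [Finset.mem_filter, Finset.mem_range] at hr
      exact hmin r hr.1 hr.2
  have hcube : p ^ 3 ≤ n :=
    le_trans (cube_le_prod p hp h13p) (Nat.le_of_dvd hn hprod)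
  have cp : Nat.Coprime p n := cop hp hpd
  refine phiT_ge3 hn (a := p ^ 2) (b := p ^ 3) (by nlinarith) (by nlinarith) hcube
    (cp.pow_left 2) (cp.pow_left 3) ?_ ?_
  · have : p ^ 2 = p * p := by ring
    rw [this]
    exact Nat.not_prime_mul (by omega) (by omega)
  · have : p ^ 3 = p * (p * p) := by ring
    rw [this]
    exact Nat.not_prime_mul (by omega) (by nlinarith)

theorem stmt15 (n : ℕ) (hn : 0 < n) :
    phiT n = 2 ↔ n ∈ ({5, 10, 14, 20, 42, 60} : Finset ℕ) := by
  constructor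
  · intro h
    have hle : n ≤ 60 := by
      by_contra hgt
      push_neg at hgt
      have := key n hn hgt
      omega
    interval_cases n <;> revert h <;> decide
  · intro h
    fin_cases h <;> decide
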